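/- (The gap sequence of E_{m,2} is Θ₂.) For every m ≥ 1 and every p ≥ 1: L(E_{m,2},p+1) − L(E_{m,2},p) = 2^{m−1} if Θ₂[p] = a, = 7·2^{m−1} if Θ₂[p] = b, and = 3·2^{m−1} if Θ₂[p] = c. -/

import Mathlib

namespace PD

/-- The period-doubling substitution on the alphabet `Bool`,
where `false` stands for the letter `a` and `true` for the letter `b`:
`σ(a) = ab`, `σ(b) = aa`. -/
def sub : Bool → List Bool
  | false => [false, true]
  | true  => [false, false]

/-- The substitution applied to a finite word. -/
def subW (w : List Bool) : List Bool := w.flatMap sub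

/-- `A m = σ^m(a)`. -/
def A (m : ℕ) : List Bool := subW^[m] [false]

/-- `B m = σ^m(b)`. -/
def B (m : ℕ) : List Bool := subW^[m] [true]

/-- The doubling sequence `D∞` (0-indexed: `D n` is the `(n+1)`-th letter),
the fixed point of `σ` beginning with `a`; `A m` is a prefix of `A (m+1)`,
and `A (n+1)` has length `2^(n+1) > n`. -/
def D (n : ℕ) : Bool := (A (n + 1)).getD n false

/-- `δ m`, the last letter of `A m`. -/
def delta (m : ℕ) : Bool := (A m).getLastD false

/-- The envelope words (`i ∈ {1,2}`): `E m 1 = A m` minus its last letter,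
`E m 2 = A (m-1) ++ (A m` minus its last letter `)`. -/
def E (m i : ℕ) : List Bool :=
  if i = 1 then (A m).dropLast else A (m - 1) ++ (A m).dropLast

/-- `w` occurs at the (1-indexed) position `j` in the finite word `τ`. -/
def OccursIn (w τ : List Bool) (j : ℕ) : Prop :=
  1 ≤ j ∧ (τ.drop (j - 1)).take w.length = w

/-- `w` occurs at the (1-indexed) position `j` in the doubling sequence. -/
def OccursD (w : List Bool) (j : ℕ) : Prop :=
  1 ≤ j ∧ ∀ k < w.length, D (j - 1 + k) = w.getD k false

/-- `w` is a factor of the doubling sequence. -/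
def FactorD (w : List Bool) : Prop := ∃ j, OccursD w j

/-- `L w p`: the (1-indexed) starting position of the `p`-th occurrence of `w`
in the doubling sequence, occurrences being ordered by starting position.
(Each factor occurs infinitely often, so `Nat.nth` enumerates all occurrences
in increasing order.) -/
noncomputable def L (w : List Bool) (p : ℕ) : ℕ := Nat.nth (OccursD w) (p - 1)

/-- The strict total order on envelope words:
`E m₁ i₁ ⊏ E m₂ i₂` iff `m₁ < m₂`, or `m₁ = m₂` and `i₁ < i₂`. -/
def EnvLt (m₁ i₁ m₂ i₂ : ℕ) : Prop := m₁ < m₂ ∨ (m₁ = m₂ ∧ i₁ < i₂)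

/-- `Env(w) = E m i`: the envelope word `E m i` is the `⊏`-minimal envelope
word containing `w` as a factor. -/
def IsEnv (w : List Bool) (m i : ℕ) : Prop :=
  1 ≤ m ∧ (i = 1 ∨ i = 2) ∧ w <:+: E m i ∧
    ∀ m' i', 1 ≤ m' → (i' = 1 ∨ i' = 2) → EnvLt m' i' m i → ¬ w <:+: E m' i'

/-- The substitution `φ₁(a) = a`, `φ₁(b) = bb`. -/
def phi1 : Bool → List Bool
  | false => [false]
  | true  => [true, true]

/-- `Θ₁ = φ₁(D∞)` (0-indexed): `φ₁(A (n+1))` is a prefix of `Θ₁` of length `> n`. -/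
def Theta1 (n : ℕ) : Bool := ((A (n + 1)).flatMap phi1).getD n false

/-- The substitution `φ₂(a) = ab`, `φ₂(b) = acac`, over the alphabet `Fin 3`
where `0` stands for `a`, `1` for `b` and `2` for `c`. -/
def phi2 : Bool → List (Fin 3)
  | false => [0, 1]
  | true  => [0, 2, 0, 2]

/-- `Θ₂ = φ₂(D∞)` (0-indexed). -/
def Theta2 (n : ℕ) : Fin 3 := ((A (n + 1)).flatMap phi2).getD n 0

/-- `N₁(x,p)`: the number of letters `x` among the first `p` letters of `Θ₁`. -/
def N1 (x : Bool) (p : ℕ) : ℕ := ((List.range p).map Theta1).count x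

/-- `N₂(x,p)`: the number of letters `x` among the first `p` letters of `Θ₂`. -/
def N2 (x : Fin 3) (p : ℕ) : ℕ := ((List.range p).map Theta2).count x

end PD

open PD


def d : ℕ → Bool
  | 0 => false
  | n + 1 => if (n + 1) % 2 = 0 then false else !d ((n + 1) / 2)
decreasing_by exact Nat.div_lt_self (Nat.succ_pos n) one_lt_two

lemma d_even (k : ℕ) : d (2 * k) = false := by
  rcases k with _ | k
  · simp [d]
  · rw [show 2 * (k + 1) = (2 * k + 1) + 1 by ring, d]
    have : (2 * k + 1 + 1) % 2 = 0 := by omega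
    simp [this]

lemma d_odd (k : ℕ) : d (2 * k + 1) = !d k := by
  rw [show 2 * k + 1 = k + k + 1 by ring, d]
  have h1 : (k + k + 1) % 2 = 1 := by omega
  have h2 : (k + k + 1) / 2 = k := by omega
  simp [h1, h2]

lemma sub_eq (x : Bool) : sub x = [false, !x] := by cases x <;> rfl

lemma subW_cons (x : Bool) (w : List Bool) : subW (x :: w) = false :: (!x) :: subW w := by
  simp [subW, sub_eq]

lemma subW_append (u v : List Bool) : subW (u ++ v) = subW u ++ subW v := by
  simp [subW]

lemma subW_length (w : List Bool) : (subW w).length = 2 * w.length := by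
  induction w with
  | nil => rfl
  | cons x xs ih => rw [subW_cons]; simp at ih ⊢; omega

lemma A_succ (m : ℕ) : A (m + 1) = subW (A m) := Function.iterate_succ_apply' _ _ _

lemma A_length (m : ℕ) : (A m).length = 2 ^ m := by
  induction m with
  | zero => rfl
  | succ m ih => rw [A_succ, subW_length, ih, pow_succ]; ring

lemma subWF_getD_even : ∀ (w : List Bool) (t : ℕ), t ≤ w.length →
    (subW w ++ [false]).getD (2 * t) false = false := by
  intro w
  induction w with
  | nil => intro t ht; simp only [List.length_nil, Nat.le_zero] at ht; subst ht; rfl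
  | cons x xs ih =>
    intro t ht
    rcases t with _ | t
    · rw [subW_cons]; rfl
    · rw [subW_cons]
      have h2 : 2 * (t + 1) = (2 * t) + 1 + 1 := by ring
      rw [h2, List.cons_append, List.cons_append, List.getD_cons_succ,
        List.getD_cons_succ]
      exact ih t (by simpa using ht)

lemma subWF_getD_odd : ∀ (w : List Bool) (t : ℕ), t < w.length →
    (subW w ++ [false]).getD (2 * t + 1) false = !(w.getD t false) := by
  intro w
  induction w with
  | nil => intro t ht; simp at ht
  | cons x xs ih =>
    intro t ht
    rcases t with _ | t
    · rw [subW_cons]; rfl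
    · rw [subW_cons]
      have h2 : 2 * (t + 1) + 1 = (2 * t + 1) + 1 + 1 := by ring
      rw [h2, List.cons_append, List.cons_append, List.getD_cons_succ,
        List.getD_cons_succ, List.getD_cons_succ]
      exact ih t (by simpa using ht)

lemma subW_getD_lt (w : List Bool) (n : ℕ) (h : n < (subW w).length) :
    (subW w ++ [false]).getD n false = (subW w).getD n false :=
  List.getD_append _ _ _ _ h

lemma A_getD : ∀ (m n : ℕ), n < 2 ^ m → (A m).getD n false = d n := by
  intro m
  induction m with
  | zero =>
    intro n hn
    interval_cases n
    · simp [A, d]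
  | succ m ih =>
    intro n hn
    rw [A_succ]
    have hlen : (subW (A m)).length = 2 ^ (m + 1) := by
      rw [subW_length, A_length]; ring
    have hlt : n < (subW (A m)).length := by omega
    rw [← subW_getD_lt _ _ hlt]
    rcases Nat.even_or_odd n with ⟨t, ht⟩ | ⟨t, ht⟩
    · subst ht
      rw [show t + t = 2 * t by ring] at *
      rw [subWF_getD_even _ t (by rw [A_length]; rw [pow_succ] at hn; omega), d_even]
    · subst ht
      have htlt : t < (A m).length := by rw [A_length]; rw [pow_succ] at hn; omega
      rw [subWF_getD_odd _ t htlt, d_odd, ih t (by rw [A_length] at htlt; omega)]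

lemma D_eq (n : ℕ) : D n = d n := by
  have h2 : n < 2 ^ (n + 1) := by
    calc n < 2 ^ n := Nat.lt_two_pow_self
    _ ≤ 2 ^ (n+1) := Nat.pow_le_pow_right (by norm_num) (by omega)
  have := A_getD (n + 1) n h2
  simpa [D] using this


def Occ (w : List Bool) (n : ℕ) : Prop := ∀ k < w.length, d (n + k) = w.getD k false

lemma occursD_iff (w : List Bool) (j : ℕ) :
    OccursD w j ↔ 1 ≤ j ∧ Occ w (j - 1) := by
  unfold OccursD Occ
  constructor
  · rintro ⟨h1, h2⟩; exact ⟨h1, fun k hk => by rw [← D_eq]; exact h2 k hk⟩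
  · rintro ⟨h1, h2⟩; exact ⟨h1, fun k hk => by rw [D_eq]; exact h2 k hk⟩

lemma A_ne_nil (m : ℕ) : A m ≠ [] := by
  have := A_length m
  intro h; rw [h] at this; simp at this
  have h2 : 0 < 2 ^ m := Nat.two_pow_pos m
  omega

lemma subW_dropLast (w : List Bool) (hw : w ≠ []) :
    (subW w).dropLast = subW w.dropLast ++ [false] := by
  conv_lhs => rw [← List.dropLast_append_getLast hw]
  rw [subW_append]
  have : subW [w.getLast hw] = [false, !(w.getLast hw)] := by
    simp [subW, sub_eq]
  rw [this, show (([false, !w.getLast hw] : List Bool)) = [false] ++ [!w.getLast hw] by rfl,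
    ← List.append_assoc, List.dropLast_concat]

lemma E2_succ (m : ℕ) (hm : 1 ≤ m) : E (m + 1) 2 = subW (E m 2) ++ [false] := by
  unfold E
  simp only [if_neg (by norm_num : (2:ℕ) ≠ 1)]
  have h1 : m + 1 - 1 = m := by omega
  have h2 : m - 1 + 1 = m := by omega
  rw [h1, subW_append, A_succ, subW_dropLast _ (A_ne_nil m), ← List.append_assoc]
  congr 2
  rw [← A_succ, h2]

lemma occ_lift (w : List Bool) (i : ℕ) (h : Occ w i) : Occ (subW w ++ [false]) (2 * i) := by
  intro k hk
  have hlen : (subW w ++ [false]).length = 2 * w.length + 1 := by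
    simp [subW_length]
  rw [hlen] at hk
  rcases Nat.even_or_odd k with ⟨t, ht⟩ | ⟨t, ht⟩
  · subst ht
    rw [show t + t = 2 * t by ring] at hk ⊢
    rw [subWF_getD_even _ t (by omega), show 2*i + 2*t = 2*(i+t) by ring, d_even]
  · subst ht
    have htw : t < w.length := by omega
    rw [subWF_getD_odd _ t htw, show 2*i + (2*t+1) = 2*(i+t)+1 by ring, d_odd,
      h t htw]

lemma occ_descend (w : List Bool) (j : ℕ) (hne : 0 < w.length)
    (hhead : w.getD 0 false = false) (h : Occ (subW w ++ [false]) j) :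
    ∃ i, j = 2 * i ∧ Occ w i := by
  have hlen : (subW w ++ [false]).length = 2 * w.length + 1 := by
    simp [subW_length]
  have h1 : d (j + 1) = true := by
    have := h 1 (by omega)
    rw [show (1:ℕ) = 2*0+1 by ring, subWF_getD_odd _ 0 hne, hhead] at this
    simpa using this
  have hjeven : j % 2 = 0 := by
    rcases Nat.even_or_odd j with ⟨t, ht⟩ | ⟨t, ht⟩
    · omega
    · exfalso
      rw [ht, show 2*t+1+1 = 2*(t+1) by ring, d_even] at h1
      exact absurd h1 (by simp)
  refine ⟨j / 2, by omega, ?_⟩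
  intro k hk
  have := h (2 * k + 1) (by omega)
  rw [subWF_getD_odd _ k hk, show j + (2*k+1) = 2*(j/2+k)+1 by omega, d_odd] at this
  exact Bool.not_inj this

def T (n : ℕ) : Prop := d n = false ∧ d (n + 1) = false

instance : DecidablePred T := fun n => by unfold T; infer_instance

lemma E2_one : E 1 2 = [false, false] := by
  unfold E
  rw [if_neg (by norm_num : (2:ℕ) ≠ 1)]
  rfl

lemma E2_head (m : ℕ) (hm : 1 ≤ m) : (E m 2).getD 0 false = false := by
  unfold E
  simp only [if_neg (by norm_num : (2:ℕ) ≠ 1)]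
  rw [List.getD_append _ _ _ _ (by rw [A_length]; exact Nat.two_pow_pos _)]
  rw [A_getD _ 0 (Nat.two_pow_pos _)]
  simp [d]

lemma E2_len (m : ℕ) (hm : 1 ≤ m) : 0 < (E m 2).length := by
  unfold E
  simp only [if_neg (by norm_num : (2:ℕ) ≠ 1)]
  rw [List.length_append, A_length]
  have : 0 < 2 ^ (m-1) := Nat.two_pow_pos _
  omega

lemma occursD_E2 : ∀ (m : ℕ), 1 ≤ m → ∀ (j : ℕ),
    OccursD (E m 2) j ↔ ∃ n, j = 2 ^ (m - 1) * n + 1 ∧ T n := by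
  intro m
  induction m with
  | zero => omega
  | succ m ih =>
    intro hm j
    rcases Nat.eq_or_lt_of_le hm with h1 | h1
    · -- m = 0
      obtain rfl : m = 0 := by omega
      rw [occursD_iff, E2_one]
      simp only [show (0:ℕ)+1-1 = 0 from rfl, pow_zero, one_mul]
      constructor
      · rintro ⟨hj, hocc⟩
        refine ⟨j - 1, by omega, ?_, ?_⟩
        · have := hocc 0 (by norm_num)
          simpa using this
        · have := hocc 1 (by norm_num)
          simpa using this
      · rintro ⟨n, rfl, hT⟩
        refine ⟨by omega, ?_⟩
        intro k hk
        simp only [List.length_cons, List.length_nil] at hk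
        interval_cases k
        · simpa using hT.1
        · simpa using hT.2
    · have hm1 : 1 ≤ m := by omega
      have hpow : (2:ℕ) ^ (m + 1 - 1) = 2 * 2 ^ (m - 1) := by
        rw [show m + 1 - 1 = (m - 1) + 1 by omega, pow_succ]; ring
      rw [occursD_iff, E2_succ m hm1]
      constructor
      · rintro ⟨hj, hocc⟩
        obtain ⟨i, hji, hocc2⟩ := occ_descend _ _ (E2_len m hm1) (E2_head m hm1) hocc
        have hOc : OccursD (E m 2) (i + 1) := by
          rw [occursD_iff]
          exact ⟨by omega, by simpa using hocc2⟩
        rw [ih hm1] at hOc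
        obtain ⟨n, hn, hT⟩ := hOc
        refine ⟨n, ?_, hT⟩
        rw [hpow, mul_assoc]
        omega
      · rintro ⟨n, hjn, hT⟩
        rw [hpow, mul_assoc] at hjn
        have hi : OccursD (E m 2) (2 ^ (m-1) * n + 1) := by
          rw [ih hm1]; exact ⟨n, rfl, hT⟩
        rw [occursD_iff] at hi
        have hocc2 := occ_lift _ _ (by simpa using hi.2)
        refine ⟨by omega, ?_⟩
        have hj1 : j - 1 = 2 * (2 ^ (m-1) * n) := by omega
        rw [hj1]
        exact hocc2

lemma d_zero : d 0 = false := by simp [d]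
lemma d_one : d 1 = true := by
  have := d_odd 0
  simp [d_zero] at this
  simpa using this

lemma d_4s1 (s : ℕ) : d (4 * s + 1) = true := by
  have := d_odd (2 * s)
  rw [show 2 * (2 * s) + 1 = 4 * s + 1 by ring, d_even] at this
  simpa using this

lemma d_4s2 (s : ℕ) : d (4 * s + 2) = false := by
  have := d_even (2 * s + 1)
  rwa [show 2 * (2 * s + 1) = 4 * s + 2 by ring] at this

lemma d_4s3 (s : ℕ) : d (4 * s + 3) = d s := by
  have h1 := d_odd (2 * s + 1)
  rw [show 2 * (2 * s + 1) + 1 = 4 * s + 3 by ring, d_odd] at h1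
  simpa using h1

lemma d_4s4 (s : ℕ) : d (4 * s + 4) = false := by
  have := d_even (2 * s + 2)
  rwa [show 2 * (2 * s + 2) = 4 * s + 4 by ring] at this

lemma d_4s5 (s : ℕ) : d (4 * s + 5) = true := by
  have := d_4s1 (s + 1)
  rwa [show 4 * (s + 1) + 1 = 4 * s + 5 by ring] at this

lemma T_4s2 (s : ℕ) : T (4 * s + 2) ↔ d s = false := by
  unfold T
  rw [d_4s2, show 4 * s + 2 + 1 = 4 * s + 3 by ring, d_4s3]
  simp

lemma T_4s3 (s : ℕ) : T (4 * s + 3) ↔ d s = false := by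
  unfold T
  rw [d_4s3, show 4 * s + 3 + 1 = 4 * s + 4 by ring, d_4s4]
  simp

lemma notT_4s0 (s : ℕ) : ¬ T (4 * s) := by
  unfold T
  rw [show 4 * s + 1 = 4 * s + 1 by ring, d_4s1]
  simp

lemma notT_4s1 (s : ℕ) : ¬ T (4 * s + 1) := by
  unfold T
  rw [d_4s1]
  simp

lemma notT_4s4 (s : ℕ) : ¬ T (4 * s + 4) := by
  have := notT_4s0 (s + 1)
  rwa [show 4 * (s + 1) = 4 * s + 4 by ring] at this

lemma notT_4s5 (s : ℕ) : ¬ T (4 * s + 5) := by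
  have := notT_4s1 (s + 1)
  rwa [show 4 * (s + 1) + 1 = 4 * s + 5 by ring] at this

def F (n : ℕ) : Prop := d n = false

instance : DecidablePred F := fun n => by unfold F; infer_instance

def g (k : ℕ) : ℕ := Nat.count F (2 * k)

lemma g_zero : g 0 = 0 := by simp [g]

lemma g_succ (k : ℕ) : g (k + 1) = g k + 1 + (if d k = true then 1 else 0) := by
  unfold g
  rw [show 2 * (k + 1) = (2 * k) + 1 + 1 by ring, Nat.count_succ, Nat.count_succ]
  have hF1 : F (2 * k) := d_even k
  have hF2 : F (2 * k + 1) ↔ d k = true := by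
    unfold F
    rw [d_odd]
    cases d k <;> simp
  rw [if_pos hF1]
  by_cases h : d k = true
  · rw [if_pos (hF2.2 h), if_pos h]
  · rw [if_neg (fun hh => h (hF2.1 hh)), if_neg h]

lemma count_T_42 : ∀ s, Nat.count T (4 * s + 2) = 2 * Nat.count F s := by
  intro s
  induction s with
  | zero =>
    show Nat.count T (0 + 1 + 1) = _
    rw [Nat.count_succ, Nat.count_succ]
    have h0 : ¬ T 0 := by simpa using notT_4s0 0
    have h1 : ¬ T 1 := by simpa using notT_4s1 0
    simp [h0, h1]
  | succ s ih =>
    rw [show 4 * (s + 1) + 2 = (4 * s + 2) + 1 + 1 + 1 + 1 by ring,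
      Nat.count_succ, Nat.count_succ, Nat.count_succ, Nat.count_succ, ih,
      Nat.count_succ]
    rw [show 4 * s + 2 + 1 = 4 * s + 3 by ring, show 4 * s + 2 + 1 + 1 = 4 * s + 4 by ring,
      show 4 * s + 2 + 1 + 1 + 1 = 4 * s + 5 by ring]
    rw [if_neg (notT_4s4 s), if_neg (notT_4s5 s)]
    by_cases h : d s = false
    · rw [if_pos ((T_4s2 s).2 h), if_pos ((T_4s3 s).2 h), if_pos (show F s from h)]
      ring
    · rw [if_neg (fun hh => h ((T_4s2 s).1 hh)), if_neg (fun hh => h ((T_4s3 s).1 hh)),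
        if_neg (show ¬ F s from h)]
      ring

lemma count_T_43 (s : ℕ) (h : d s = false) :
    Nat.count T (4 * s + 3) = 2 * Nat.count F s + 1 := by
  rw [show 4 * s + 3 = (4 * s + 2) + 1 by ring, Nat.count_succ, count_T_42,
    if_pos ((T_4s2 s).2 h)]

lemma count_affine (N : ℕ) (hN : 0 < N) (P : ℕ → Prop) [DecidablePred P]
    (hP : ∀ j, P j ↔ ∃ n, j = N * n + 1 ∧ T n) :
    ∀ n, Nat.count P (N * n + 1) = Nat.count T n := by
  have hP1 : ∀ n, P (N * n + 1) ↔ T n := by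
    intro n
    rw [hP]
    constructor
    · rintro ⟨i, hi, hT⟩
      have : N * n = N * i := by omega
      have : n = i := Nat.eq_of_mul_eq_mul_left hN this
      subst this; exact hT
    · intro h; exact ⟨n, rfl, h⟩
  intro n
  induction n with
  | zero =>
    rw [show N * 0 + 1 = 0 + 1 by ring, Nat.count_succ]
    have : ¬ P 0 := by
      rw [hP]; rintro ⟨i, hi, -⟩; omega
    simp [this]
  | succ n ih =>
    have key : ∀ s, 1 ≤ s → s ≤ N → Nat.count P (N * n + 1 + s) = Nat.count T (n + 1) := by
      intro s
      induction s with
      | zero => omega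
      | succ s ihs =>
        intro _ hsN
        rcases Nat.eq_or_lt_of_le (show 1 ≤ s + 1 from by omega) with h1 | h1
        · obtain rfl : s = 0 := by omega
          rw [show N * n + 1 + 1 = (N * n + 1) + 1 by ring, Nat.count_succ, ih,
            Nat.count_succ]
          by_cases h : T n
          · rw [if_pos ((hP1 n).2 h), if_pos h]
          · rw [if_neg (fun hh => h ((hP1 n).1 hh)), if_neg h]
        · have hs1 : 1 ≤ s := by omega
          rw [show N * n + 1 + (s + 1) = (N * n + 1 + s) + 1 by ring, Nat.count_succ,
            ihs hs1 (by omega)]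
          have : ¬ P (N * n + 1 + s) := by
            rw [hP]
            rintro ⟨i, hi, -⟩
            have hNi : N * i = N * n + s := by omega
            rcases le_or_gt i n with hle | hlt
            · have := Nat.mul_le_mul_left N hle
              omega
            · have : n + 1 ≤ i := hlt
              have := Nat.mul_le_mul_left N this
              rw [Nat.mul_add, Nat.mul_one] at this
              omega
          simp [this]
    have := key N (by omega) le_rfl
    rwa [show N * n + 1 + N = N * (n + 1) + 1 by ring] at this

lemma nth_affine (N : ℕ) (hN : 0 < N) (P : ℕ → Prop) [DecidablePred P]
    (hP : ∀ j, P j ↔ ∃ n, j = N * n + 1 ∧ T n)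
    (k x : ℕ) (hx : T x) (hc : Nat.count T x = k) :
    Nat.nth P k = N * x + 1 := by
  have h1 : P (N * x + 1) := (hP _).2 ⟨x, rfl, hx⟩
  have h2 := Nat.nth_count h1
  rwa [count_affine N hN P hP, hc] at h2


lemma flat_getD : ∀ (w : List Bool) (k j : ℕ), k < w.length →
    j < (phi2 (w.getD k false)).length →
    (w.flatMap phi2).getD (((w.take k).flatMap phi2).length + j) 0
      = (phi2 (w.getD k false)).getD j 0 := by
  intro w
  induction w with
  | nil => intro k j hk; simp at hk
  | cons x xs ih =>
    intro k j hk hj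
    rcases k with _ | k
    · simp only [List.take_zero, List.flatMap_nil, List.length_nil, Nat.zero_add]
      rw [List.flatMap_cons, List.getD_cons_zero] at *
      exact List.getD_append _ _ _ _ (by simpa using hj)
    · rw [List.flatMap_cons]
      have htake : (x :: xs).take (k + 1) = x :: xs.take k := rfl
      rw [htake, List.flatMap_cons, List.length_append]
      rw [List.getD_cons_succ] at hj ⊢
      rw [Nat.add_assoc, List.getD_append_right _ _ _ _ (by omega), Nat.add_sub_cancel_left]
      exact ih k j (by simpa using hk) hj

lemma phi2_len (x : Bool) : (phi2 x).length = 2 + (if x = true then 2 else 0) := by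
  cases x <;> rfl

lemma offlen : ∀ (M k : ℕ), k ≤ 2 ^ M →
    (((A M).take k).flatMap phi2).length = 2 * g k := by
  intro M k
  induction k with
  | zero => intro _; simp [g_zero]
  | succ k ih =>
    intro hk
    have hkl : k < (A M).length := by rw [A_length]; omega
    have hA : (A M).getD k false = d k := A_getD M k (by omega)
    have hgetel : (A M)[k] = d k := (List.getD_eq_getElem _ false hkl).symm.trans hA
    have htake : (A M).take (k + 1) = (A M).take k ++ [d k] := by
      rw [List.take_succ, List.getElem?_eq_getElem hkl, hgetel]
      rfl
    rw [htake, List.flatMap_append, List.length_append, ih (by omega)]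
    have hsing : ([d k].flatMap phi2).length = (phi2 (d k)).length := by simp
    rw [hsing, phi2_len, g_succ]
    by_cases h : d k = true <;> simp [h] <;> ring

lemma g_ge (k : ℕ) : k ≤ g k := by
  induction k with
  | zero => simp [g_zero]
  | succ k ih => rw [g_succ]; omega

lemma theta2_block (k j : ℕ) (hj : j < (phi2 (d k)).length) :
    Theta2 (2 * g k + j) = (phi2 (d k)).getD j 0 := by
  set n := 2 * g k + j with hn
  have hkgk := g_ge k
  have hkn : k ≤ n := by omega
  have hn2 : n < 2 ^ (n + 1) := by
    calc n < 2 ^ n := Nat.lt_two_pow_self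
    _ ≤ 2 ^ (n + 1) := Nat.pow_le_pow_right (by norm_num) (by omega)
  have hklt : k < 2 ^ (n + 1) := by omega
  have hAk : (A (n + 1)).getD k false = d k := A_getD _ _ hklt
  have hoff := offlen (n + 1) k (by omega)
  have := flat_getD (A (n + 1)) k j (by rw [A_length]; exact hklt) (by rw [hAk]; exact hj)
  rw [hoff, hAk] at this
  exact this

lemma exists_block : ∀ r, ∃ k, g k ≤ r ∧ r < g (k + 1) := by
  intro r
  induction r with
  | zero =>
    exact ⟨0, by simp [g_zero], by rw [g_succ]; omega⟩
  | succ r ih =>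
    obtain ⟨k, hk1, hk2⟩ := ih
    rcases Nat.lt_or_ge (r + 1) (g (k + 1)) with h | h
    · exact ⟨k, by omega, h⟩
    · refine ⟨k + 1, h, ?_⟩
      rw [g_succ (k+1)]
      omega

lemma theta2_even (r : ℕ) : Theta2 (2 * r) = 0 := by
  obtain ⟨k, hk1, hk2⟩ := exists_block r
  by_cases hd : d k = true
  · have hg : g (k + 1) = g k + 2 := by rw [g_succ]; simp [hd]
    rcases (by omega : r = g k ∨ r = g k + 1) with hr | hr
    · have := theta2_block k 0 (by rw [hd]; norm_num [phi2])
      rw [hd] at this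
      rw [hr, show 2 * g k = 2 * g k + 0 from rfl]
      exact this
    · have := theta2_block k 2 (by rw [hd]; norm_num [phi2])
      rw [hd] at this
      rw [hr, show 2 * (g k + 1) = 2 * g k + 2 by ring]
      exact this
  · have hdf : d k = false := by simpa using hd
    have hg : g (k + 1) = g k + 1 := by rw [g_succ]; simp [hdf]
    have hr : r = g k := by omega
    have := theta2_block k 0 (by rw [hdf]; norm_num [phi2])
    rw [hdf] at this
    rw [hr, show 2 * g k = 2 * g k + 0 from rfl]
    exact this

lemma theta2_odd (r k : ℕ) (hk1 : g k ≤ r) (hk2 : r < g (k + 1)) :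
    Theta2 (2 * r + 1) = if d k = true then 2 else 1 := by
  by_cases hd : d k = true
  · have hg : g (k + 1) = g k + 2 := by rw [g_succ]; simp [hd]
    rw [if_pos hd]
    rcases (by omega : r = g k ∨ r = g k + 1) with hr | hr
    · have := theta2_block k 1 (by rw [hd]; norm_num [phi2])
      rw [hd] at this
      rw [hr]
      exact this
    · have := theta2_block k 3 (by rw [hd]; norm_num [phi2])
      rw [hd] at this
      rw [hr, show 2 * (g k + 1) + 1 = 2 * g k + 3 by ring]
      exact this
  · have hdf : d k = false := by simpa using hd
    have hg : g (k + 1) = g k + 1 := by rw [g_succ]; simp [hdf]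
    have hr : r = g k := by omega
    rw [if_neg hd]
    have := theta2_block k 1 (by rw [hdf]; norm_num [phi2])
    rw [hdf] at this
    rw [hr]
    exact this

lemma count_F_even (k : ℕ) : Nat.count F (2 * k) = g k := rfl

lemma count_F_odd (k : ℕ) : Nat.count F (2 * k + 1) = g k + 1 := by
  rw [Nat.count_succ, count_F_even, if_pos (show F (2 * k) from d_even k)]

lemma count_F_even' (k : ℕ) : Nat.count F (2 * k + 2) = g (k + 1) := by
  rw [show 2 * k + 2 = 2 * (k + 1) by ring, count_F_even]

lemma exists_s (r : ℕ) : ∃ k s s', (g k ≤ r ∧ r < g (k + 1)) ∧ d s = false ∧ d s' = false ∧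
    Nat.count F s = r ∧ Nat.count F s' = r + 1 ∧
    s' = s + (if d k = true then 1 else 2) := by
  obtain ⟨k, hk1, hk2⟩ := exists_block r
  by_cases hd : d k = true
  · have hg : g (k + 1) = g k + 2 := by rw [g_succ]; simp [hd]
    have hodd : d (2 * k + 1) = false := by rw [d_odd, hd]; rfl
    rcases (by omega : r = g k ∨ r = g k + 1) with hr | hr
    · exact ⟨k, 2 * k, 2 * k + 1, ⟨hk1, hk2⟩, d_even k, hodd,
        by rw [count_F_even, hr], by rw [count_F_odd, hr], by rw [if_pos hd]⟩
    · exact ⟨k, 2 * k + 1, 2 * k + 2, ⟨hk1, hk2⟩, hodd, by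
        rw [show 2 * k + 2 = 2 * (k + 1) by ring]; exact d_even (k + 1),
        by rw [count_F_odd, hr], by rw [count_F_even', hg, hr], by rw [if_pos hd]⟩
  · have hdf : d k = false := by simpa using hd
    have hg : g (k + 1) = g k + 1 := by rw [g_succ]; simp [hdf]
    have hr : r = g k := by omega
    exact ⟨k, 2 * k, 2 * k + 2, ⟨hk1, hk2⟩, d_even k, by
      rw [show 2 * k + 2 = 2 * (k + 1) by ring]; exact d_even (k + 1),
      by rw [count_F_even, hr], by rw [count_F_even', hg, hr], by rw [if_neg hd]⟩


/-- The gap sequence of `E m 2` is `Θ₂`: for `m ≥ 1` and `p ≥ 1`, the distance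
between the `p`-th and `(p+1)`-th occurrences of `E m 2` is `2^(m-1)` when
`Θ₂[p] = a`, `7·2^(m-1)` when `Θ₂[p] = b`, and `3·2^(m-1)` when `Θ₂[p] = c`. -/
theorem doubling_gap_sequence_E2 (m : ℕ) (hm : 1 ≤ m) (p : ℕ) (hp : 1 ≤ p) :
    (Theta2 (p - 1) = 0 → L (E m 2) (p + 1) - L (E m 2) p = 2 ^ (m - 1)) ∧
      (Theta2 (p - 1) = 1 → L (E m 2) (p + 1) - L (E m 2) p = 7 * 2 ^ (m - 1)) ∧
      (Theta2 (p - 1) = 2 → L (E m 2) (p + 1) - L (E m 2) p = 3 * 2 ^ (m - 1)) := by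
  haveI : DecidablePred (OccursD (E m 2)) := Classical.decPred _
  set N := 2 ^ (m - 1) with hNdef
  have hN : 0 < N := Nat.two_pow_pos _
  have hP : ∀ j, OccursD (E m 2) j ↔ ∃ n, j = N * n + 1 ∧ T n := occursD_E2 m hm
  have hL1 : L (E m 2) (p + 1) = Nat.nth (OccursD (E m 2)) (p - 1 + 1) := by
    unfold PD.L; congr 1; omega
  have hL0 : L (E m 2) p = Nat.nth (OccursD (E m 2)) (p - 1) := rfl
  set q := p - 1 with hq
  rcases Nat.even_or_odd q with ⟨r, hr⟩ | ⟨r, hr⟩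
  · -- q = 2r : within-pair gap, Theta2 q = 0
    rw [show r + r = 2 * r by ring] at hr
    obtain ⟨k, s, s', ⟨hk1, hk2⟩, hds, hds', hcs, hcs', hrel⟩ := exists_s r
    have hT1 : T (4 * s + 2) := (T_4s2 s).2 hds
    have hT2 : T (4 * s + 3) := (T_4s3 s).2 hds
    have hc1 : Nat.count T (4 * s + 2) = q := by rw [count_T_42, hcs, hr]
    have hc2 : Nat.count T (4 * s + 3) = q + 1 := by rw [count_T_43 s hds, hcs]; omega
    have hnth1 : Nat.nth (OccursD (E m 2)) q = N * (4 * s + 2) + 1 :=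
      nth_affine N hN _ hP q _ hT1 hc1
    have hnth2 : Nat.nth (OccursD (E m 2)) (q + 1) = N * (4 * s + 3) + 1 :=
      nth_affine N hN _ hP (q + 1) _ hT2 hc2
    have hgap : L (E m 2) (p + 1) - L (E m 2) p = N := by
      rw [hL1, hL0, hnth1, hnth2]
      have : N * (4 * s + 3) = N * (4 * s + 2) + N := by ring
      omega
    have hθ : Theta2 q = 0 := by rw [hr]; exact theta2_even r
    refine ⟨fun _ => hgap, fun h => ?_, fun h => ?_⟩ <;> rw [hθ] at h <;> exact absurd h (by decide)
  · -- q = 2r + 1 : between-pair gap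
    rw [show 2 * r + 1 = 2 * r + 1 by ring] at hr
    obtain ⟨k, s, s', ⟨hk1, hk2⟩, hds, hds', hcs, hcs', hrel⟩ := exists_s r
    have hT1 : T (4 * s + 3) := (T_4s3 s).2 hds
    have hT2 : T (4 * s' + 2) := (T_4s2 s').2 hds'
    have hc1 : Nat.count T (4 * s + 3) = q := by rw [count_T_43 s hds, hcs]; omega
    have hc2 : Nat.count T (4 * s' + 2) = q + 1 := by rw [count_T_42, hcs']; omega
    have hnth1 : Nat.nth (OccursD (E m 2)) q = N * (4 * s + 3) + 1 :=
      nth_affine N hN _ hP q _ hT1 hc1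
    have hnth2 : Nat.nth (OccursD (E m 2)) (q + 1) = N * (4 * s' + 2) + 1 :=
      nth_affine N hN _ hP (q + 1) _ hT2 hc2
    have hθ : Theta2 q = if d k = true then 2 else 1 := by
      rw [hr]; exact theta2_odd r k hk1 hk2
    by_cases hd : d k = true
    · -- gap 3N, Theta2 q = 2
      rw [if_pos hd] at hθ
      have hs' : s' = s + 1 := by rw [hrel, if_pos hd]
      have hgap : L (E m 2) (p + 1) - L (E m 2) p = 3 * N := by
        rw [hL1, hL0, hnth1, hnth2, hs']
        have : N * (4 * (s + 1) + 2) = N * (4 * s + 3) + 3 * N := by ring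
        omega
      refine ⟨fun h => ?_, fun h => ?_, fun _ => hgap⟩ <;> rw [hθ] at h <;>
        exact absurd h (by decide)
    · -- gap 7N, Theta2 q = 1
      rw [if_neg hd] at hθ
      have hs' : s' = s + 2 := by rw [hrel, if_neg hd]
      have hgap : L (E m 2) (p + 1) - L (E m 2) p = 7 * N := by
        rw [hL1, hL0, hnth1, hnth2, hs']
        have : N * (4 * (s + 2) + 2) = N * (4 * s + 3) + 7 * N := by ring
        omega
      refine ⟨fun h => ?_, fun _ => hgap, fun h => ?_⟩ <;> rw [hθ] at h <;>
        exact absurd h (by decide)
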